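/- Let V be a 2-dimensional ℚ-vector space with symmetric bilinear form given in a basis (e_x, e_y) by η(e_x,e_x)=0, η(e_x,e_y)=1, η(e_y,e_y)=0. Let R(z) be the End(V)-valued power series with matrix entries R(z) = [[B1^even(cz), −B1^odd(cz)],[−B0^odd(cz), B0^even(cz)]] for a fixed nonzero scalar c. Then R satisfies the symplectic condition R(z)·R*(−z) = 1, where R* is the adjoint with respect to η. -/

import Mathlib

open PowerSeries Matrix

/-- The coefficient of `T^m` in the Faber–Zagier series `B0`. -/
noncomputable def b0coeff (m : ℕ) : ℚ :=
  (-1) ^ m * (Nat.factorial (6 * m) : ℚ) /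
    ((Nat.factorial (2 * m) : ℚ) * (Nat.factorial (3 * m) : ℚ))

/-- The coefficient of `T^m` in the Faber–Zagier series `B1`. -/
noncomputable def b1coeff (m : ℕ) : ℚ :=
  (-1) ^ m * ((1 + 6 * (m : ℚ)) / (1 - 6 * (m : ℚ))) * (Nat.factorial (6 * m) : ℚ) /
    ((Nat.factorial (2 * m) : ℚ) * (Nat.factorial (3 * m) : ℚ))

lemma fact_cast_succ6 (n : ℕ) : ((Nat.factorial (n+6)) : ℚ)
    = ((n:ℚ)+6)*((n:ℚ)+5)*((n:ℚ)+4)*((n:ℚ)+3)*((n:ℚ)+2)*((n:ℚ)+1)*(Nat.factorial n : ℚ) := by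
  simp [Nat.factorial_succ]; ring

lemma fact_cast_succ2 (n : ℕ) : ((Nat.factorial (n+2)) : ℚ)
    = ((n:ℚ)+2)*((n:ℚ)+1)*(Nat.factorial n : ℚ) := by
  simp [Nat.factorial_succ]; ring

lemma fact_cast_succ3 (n : ℕ) : ((Nat.factorial (n+3)) : ℚ)
    = ((n:ℚ)+3)*((n:ℚ)+2)*((n:ℚ)+1)*(Nat.factorial n : ℚ) := by
  simp [Nat.factorial_succ]; ring

lemma fact_ne (n : ℕ) : ((Nat.factorial n : ℚ)) ≠ 0 := by
  exact_mod_cast Nat.factorial_ne_zero n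

lemma one_sub_six_ne (m : ℕ) : (1 : ℚ) - 6*(m:ℚ) ≠ 0 := by
  intro h
  have : (1 : ℤ) - 6*(m:ℤ) = 0 := by exact_mod_cast h
  omega

lemma b0_rec (m : ℕ) : ((m:ℚ)+1) * b0coeff (m+1)
    = -12*(6*(m:ℚ)+1)*(6*(m:ℚ)+5) * b0coeff m := by
  unfold b0coeff
  have h6 : 6*(m+1) = 6*m+6 := by ring
  have h2 : 2*(m+1) = 2*m+2 := by ring
  have h3 : 3*(m+1) = 3*m+3 := by ring
  rw [h6, h2, h3, fact_cast_succ6, fact_cast_succ2, fact_cast_succ3]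
  have e1 := fact_ne (6*m); have e2 := fact_ne (2*m); have e3 := fact_ne (3*m)
  field_simp
  push_cast
  ring

lemma relB (m : ℕ) : (1 - 6*(m:ℚ)) * b1coeff m = (1 + 6*(m:ℚ)) * b0coeff m := by
  unfold b0coeff b1coeff
  have := one_sub_six_ne m
  field_simp

lemma b0_succ (m : ℕ) : b0coeff (m+1)
    = -12*(6*(m:ℚ)+1)*(6*(m:ℚ)+5) * b0coeff m / ((m:ℚ)+1) := by
  rw [eq_div_iff (by positivity : ((m:ℚ)+1) ≠ 0)]
  linear_combination b0_rec m

lemma b1_eq (m : ℕ) : b1coeff m = (1 + 6*(m:ℚ)) * b0coeff m / (1 - 6*(m:ℚ)) := by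
  rw [eq_div_iff (one_sub_six_ne m)]
  linear_combination relB m

lemma b0_zero : b0coeff 0 = 1 := by norm_num [b0coeff, Nat.factorial]
lemma b0_one : b0coeff 1 = -60 := by norm_num [b0coeff, Nat.factorial]
lemma b1_zero : b1coeff 0 = 1 := by norm_num [b1coeff, Nat.factorial]
lemma b1_one : b1coeff 1 = 84 := by norm_num [b1coeff, Nat.factorial]

noncomputable def Cc (n : ℕ) : ℚ := 20736*(n:ℚ)*(3*(n:ℚ)+2)*(3*(n:ℚ)+4)

noncomputable def GG (n k : ℕ) : ℚ :=
  if k = 0 ∨ n + 3 ≤ k then 0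
  else ((k:ℚ)*(187 + 451*(n:ℚ) + 324*(n:ℚ)^2 + 72*(n:ℚ)^3)
        + (k:ℚ)^2*(-168 - 288*(n:ℚ) - 108*(n:ℚ)^2) + (k:ℚ)^3*(36+36*(n:ℚ)))
      / (((n:ℚ)+2)*(6*(k:ℚ)-6*(n:ℚ)-7)*(6*(k:ℚ)-6*(n:ℚ)-11))
      * ((-1)^k * b1coeff k * b0coeff (n + 2 - k))

lemma GG_eq (n k : ℕ) (h0 : k ≠ 0) (h3 : k < n + 3) : GG n k
    = ((k:ℚ)*(187 + 451*(n:ℚ) + 324*(n:ℚ)^2 + 72*(n:ℚ)^3)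
        + (k:ℚ)^2*(-168 - 288*(n:ℚ) - 108*(n:ℚ)^2) + (k:ℚ)^3*(36+36*(n:ℚ)))
      / (((n:ℚ)+2)*(6*(k:ℚ)-6*(n:ℚ)-7)*(6*(k:ℚ)-6*(n:ℚ)-11))
      * ((-1)^k * b1coeff k * b0coeff (n + 2 - k)) := by
  unfold GG
  rw [if_neg (by omega)]

lemma seven_ne (k n : ℕ) : (6*(k:ℚ)-6*(n:ℚ)-7) ≠ 0 := by
  intro h
  have : 6*(k:ℤ)-6*(n:ℤ)-7 = 0 := by exact_mod_cast h
  omega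

lemma eleven_ne (k n : ℕ) : (6*(k:ℚ)-6*(n:ℚ)-11) ≠ 0 := by
  intro h
  have : 6*(k:ℤ)-6*(n:ℤ)-11 = 0 := by exact_mod_cast h
  omega

set_option maxHeartbeats 1600000 in
lemma step (n k : ℕ) (hk : k ≤ n + 2) :
    GG n (k+1) - GG n k
      = ((n:ℚ)+1) * ((-1)^k * b1coeff k * b0coeff (n+2-k))
        - (if k ≤ n then Cc n * ((-1)^k * b1coeff k * b0coeff (n-k)) else 0) := by
  by_cases hkn : k ≤ n
  · obtain ⟨j, rfl⟩ := Nat.exists_eq_add_of_le hkn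
    have i1 : k + j + 2 - k = j + 2 := by omega
    have i2 : k + j + 2 - (k+1) = j + 1 := by omega
    have i3 : k + j - k = j := by omega
    rw [if_pos hkn, i1, i3, Cc]
    have hj1 := b0_succ j
    have hj2 := b0_succ (j+1)
    push_cast at hj1 hj2
    have pj1 : ((j:ℚ)+1) ≠ 0 := by positivity
    have pj2 : ((j:ℚ)+2) ≠ 0 := by positivity
    have pkj2 : ((k:ℚ)+(j:ℚ)+2) ≠ 0 := by positivity
    have q7a := seven_ne (k+1) (k+j); have q7b := seven_ne k (k+j)
    have q11a := eleven_ne (k+1) (k+j); have q11b := eleven_ne k (k+j)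
    push_cast at q7a q7b q11a q11b
    rcases Nat.eq_zero_or_pos k with rfl | hpos
    · rw [GG_eq _ _ (by omega) (by omega)]
      unfold GG
      rw [if_pos (by omega)]
      simp only [zero_add, i2, pow_zero, pow_one]
      push_cast
      rw [b1_one, b1_zero, hj2, hj1]
      have hD : (10 + (j:ℚ) * 87 + (j:ℚ) ^ 2 * 185 + (j:ℚ) ^ 3 * 144 + (j:ℚ) ^ 4 * 36) ≠ 0 := by
        positivity
      ring_nf at *
      field_simp
      ring
    · rw [GG_eq _ _ (by omega) (by omega), GG_eq _ _ (by omega) (by omega), i2, i1]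
      have hbk := b1_eq k
      have hbk1 := b1_eq (k+1)
      have hk1 := b0_succ k
      have h61 := one_sub_six_ne k
      have h62 := one_sub_six_ne (k+1)
      push_cast at hbk hbk1 hk1 h61 h62
      have pk1 : ((k:ℚ)+1) ≠ 0 := by positivity
      rw [hbk1, hbk, hk1, hj2, hj1]
      push_cast
      ring_nf at *
      field_simp
      ring
  · rw [if_neg hkn]
    rcases (by omega : k = n + 1 ∨ k = n + 2) with rfl | rfl
    · have i1 : n + 2 - (n+1) = 1 := by omega
      have i2 : n + 2 - (n+1+1) = 0 := by omega
      rw [GG_eq _ _ (by omega) (by omega), GG_eq _ _ (by omega) (by omega), i1, i2]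
      have hb2 := b1_eq (n+2)
      have hb1 := b1_eq (n+1)
      have hc2 := b0_succ (n+1)
      have h61 := one_sub_six_ne (n+1)
      have h62 := one_sub_six_ne (n+2)
      have q7a := seven_ne (n+2) n; have q7b := seven_ne (n+1) n
      have q11a := eleven_ne (n+2) n; have q11b := eleven_ne (n+1) n
      have pn2 : ((n:ℚ)+2) ≠ 0 := by positivity
      push_cast at hb2 hb1 hc2 h61 h62 q7a q7b q11a q11b
      rw [b0_zero, b0_one, hb2, hb1, hc2]
      push_cast
      generalize b0coeff (n + 1) = X
      have hD : (-220 - (n:ℚ) * 340 + (-((n:ℚ) ^ 2 * 175) - (n:ℚ) ^ 3 * 30)) ≠ 0 := by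
        have h1 : (0:ℚ) < 220 + (n:ℚ) * 340 + (n:ℚ) ^ 2 * 175 + (n:ℚ) ^ 3 * 30 := by positivity
        intro h
        nlinarith
      ring_nf at *
      field_simp
      ring
    · have i1 : n + 2 - (n+2) = 0 := by omega
      have h0 : GG n (n+2+1) = 0 := by unfold GG; rw [if_pos (by omega)]
      rw [h0, GG_eq _ _ (by omega) (by omega), i1, b0_zero]
      have q7b := seven_ne (n+2) n
      have q11b := eleven_ne (n+2) n
      have pn2 : ((n:ℚ)+2) ≠ 0 := by positivity
      push_cast at q7b q11b
      push_cast
      field_simp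
      ring

noncomputable def fseq (n : ℕ) : ℚ :=
  ∑ k ∈ Finset.range (n+1), (-1)^k * b1coeff k * b0coeff (n-k)

lemma L1 (n : ℕ) : ((n:ℚ)+1) * fseq (n+2) = Cc n * fseq n := by
  have tel := Finset.sum_range_sub (fun k => GG n k) (n+3)
  have h3 : GG n (n+3) = 0 := by unfold GG; rw [if_pos (by omega)]
  have h0 : GG n 0 = 0 := by unfold GG; rw [if_pos (by omega)]
  rw [h3, h0, sub_zero] at tel
  have tel2 : ∑ k ∈ Finset.range (n+3),
      (((n:ℚ)+1) * ((-1)^k * b1coeff k * b0coeff (n+2-k))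
        - (if k ≤ n then Cc n * ((-1)^k * b1coeff k * b0coeff (n-k)) else 0)) = 0 := by
    refine Eq.trans (Finset.sum_congr rfl fun k hk => ?_) tel
    exact (step n k (by simp only [Finset.mem_range] at hk; omega)).symm
  rw [Finset.sum_sub_distrib] at tel2
  have e1 : ∑ k ∈ Finset.range (n+3), ((n:ℚ)+1) * ((-1)^k * b1coeff k * b0coeff (n+2-k))
      = ((n:ℚ)+1) * fseq (n+2) := by
    rw [fseq, Finset.mul_sum]
  have e2 : ∑ k ∈ Finset.range (n+3),
      (if k ≤ n then Cc n * ((-1)^k * b1coeff k * b0coeff (n-k)) else 0)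
      = Cc n * fseq n := by
    rw [fseq, Finset.mul_sum]
    rw [← Finset.sum_subset (Finset.range_subset_range.mpr (by omega : n+1 ≤ n+3))
      (by intro x hx hnx
          simp only [Finset.mem_range] at hx hnx
          rw [if_neg (by omega)])]
    apply Finset.sum_congr rfl
    intro k hk
    simp only [Finset.mem_range] at hk
    rw [if_pos (by omega)]
  rw [e1, e2] at tel2
  linarith

lemma fseq_zero : fseq 0 = 1 := by
  simp [fseq, b1_zero, b0_zero]

lemma Cc_zero : Cc 0 = 0 := by simp [Cc]

lemma fseq_two_step : ∀ m : ℕ, fseq (2*m+2) = 0 := by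
  intro m
  induction m with
  | zero =>
    have h := L1 0
    rw [Cc_zero, zero_mul] at h
    push_cast at h
    linarith
  | succ l ih =>
    have h := L1 (2*l+2)
    have e : 2*l+2+2 = 2*(l+1)+2 := by omega
    rw [e, ih, mul_zero] at h
    have hne : ((2*l+2 : ℕ):ℚ) + 1 ≠ 0 := by positivity
    exact (mul_eq_zero.mp h).resolve_left hne

lemma fseq_even (n : ℕ) (h : Even n) (h0 : n ≠ 0) : fseq n = 0 := by
  obtain ⟨m, rfl⟩ := h
  obtain ⟨l, rfl⟩ := Nat.exists_eq_succ_of_ne_zero (by omega : m ≠ 0)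
  have e : l + 1 + (l + 1) = 2*l+2 := by omega
  rw [e]
  exact fseq_two_step l

/-- `B0^even(c z)` as a power series in `z`. -/
noncomputable def B0evenC (c : ℚ) : PowerSeries ℚ :=
  PowerSeries.mk fun m => if Even m then b0coeff m * c ^ m else 0

/-- `B0^odd(c z)`. -/
noncomputable def B0oddC (c : ℚ) : PowerSeries ℚ :=
  PowerSeries.mk fun m => if ¬ Even m then b0coeff m * c ^ m else 0

/-- `B1^even(c z)`. -/
noncomputable def B1evenC (c : ℚ) : PowerSeries ℚ :=
  PowerSeries.mk fun m => if Even m then b1coeff m * c ^ m else 0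

/-- `B1^odd(c z)`. -/
noncomputable def B1oddC (c : ℚ) : PowerSeries ℚ :=
  PowerSeries.mk fun m => if ¬ Even m then b1coeff m * c ^ m else 0

/-- The `R`-matrix `R(z)`, as a `2×2` matrix of power series in `z`. -/
noncomputable def Rmat (c : ℚ) : Matrix (Fin 2) (Fin 2) (PowerSeries ℚ) :=
  !![B1evenC c, -B1oddC c; -B0oddC c, B0evenC c]

/-- `R(-z)`: even parts are unchanged, odd parts change sign. -/
noncomputable def RmatNeg (c : ℚ) : Matrix (Fin 2) (Fin 2) (PowerSeries ℚ) :=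
  !![B1evenC c, B1oddC c; B0oddC c, B0evenC c]

/-- The form `η = [[0,1],[1,0]]`, with entries regarded as constant power series. -/
noncomputable def etaMat : Matrix (Fin 2) (Fin 2) (PowerSeries ℚ) := !![0, 1; 1, 0]

lemma keyPS (c : ℚ) : B1evenC c * B0evenC c - B1oddC c * B0oddC c = 1 := by
  ext n
  rw [map_sub, PowerSeries.coeff_mul, PowerSeries.coeff_mul, PowerSeries.coeff_one,
    Finset.Nat.sum_antidiagonal_eq_sum_range_succ_mk,
    Finset.Nat.sum_antidiagonal_eq_sum_range_succ_mk, ← Finset.sum_sub_distrib]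
  simp only [B0evenC, B1evenC, B0oddC, B1oddC, PowerSeries.coeff_mk]
  rcases Nat.even_or_odd n with he | ho
  · have hsum : ∑ k ∈ Finset.range (n+1),
        ((if Even k then b1coeff k * c^k else 0) * (if Even (n-k) then b0coeff (n-k) * c^(n-k) else 0)
        - (if ¬ Even k then b1coeff k * c^k else 0) * (if ¬ Even (n-k) then b0coeff (n-k) * c^(n-k) else 0))
        = fseq n * c^n := by
      rw [fseq, Finset.sum_mul]
      apply Finset.sum_congr rfl
      intro k hk
      simp only [Finset.mem_range] at hk
      have hkn : k ≤ n := by omega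
      have hpar : Even (n-k) ↔ Even k := by
        rw [Nat.even_sub hkn]
        tauto
      have hcc : c^k * c^(n-k) = c^n := by
        rw [← pow_add, Nat.add_sub_cancel' hkn]
      by_cases hek : Even k
      · rw [if_pos hek, if_pos (hpar.mpr hek), if_neg (by tauto), zero_mul, sub_zero,
          Even.neg_one_pow hek]
        ring_nf
        rw [show b1coeff k * c^k * c^(n-k) = b1coeff k * c^n by rw [mul_assoc, hcc]]
      · rw [if_neg hek, if_pos (by tauto : ¬ Even (n-k)), zero_mul, zero_sub, if_pos (by tauto),
          Odd.neg_one_pow (Nat.odd_iff.mpr (Nat.not_even_iff.mp hek))]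
        ring_nf
        rw [show b1coeff k * c^k * c^(n-k) = b1coeff k * c^n by rw [mul_assoc, hcc]]
    rw [hsum]
    rcases Nat.eq_zero_or_pos n with rfl | hpos
    · rw [fseq_zero, if_pos rfl]
      norm_num
    · rw [fseq_even n he (by omega), if_neg (by omega), zero_mul]
  · have h0 : n ≠ 0 := by rintro rfl; exact (Nat.not_odd_iff_even.mpr Even.zero) ho
    rw [if_neg h0]
    apply Finset.sum_eq_zero
    intro k hk
    simp only [Finset.mem_range] at hk
    have hkn : k ≤ n := by omega
    have hpar : Even (n-k) ↔ ¬ Even k := by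
      rw [Nat.even_sub hkn]
      constructor
      · intro h hek
        exact (Nat.not_odd_iff_even.mpr (h.mpr hek)) ho
      · intro h
        constructor
        · intro hn; exact absurd (Nat.not_odd_iff_even.mpr hn ho) (fun _ => h (by tauto))
        · intro hk'; exact absurd hk' h
    by_cases hek : Even k
    · rw [if_neg (by tauto : ¬ Even (n-k)), mul_zero, if_neg (by tauto), zero_mul, sub_zero]
    · rw [if_neg hek, zero_mul, if_neg (by tauto : ¬ ¬ Even (n-k)), mul_zero, sub_zero]

/-- The symplectic condition `R(z) ⬝ R*(-z) = 1`, where the adjoint with respect to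
`η` is `R* = η⁻¹ Rᵀ η = η Rᵀ η`. -/
theorem Rmat_symplectic (c : ℚ) (hc : c ≠ 0) :
    Rmat c * (etaMat * (RmatNeg c)ᵀ * etaMat) = 1 := by
  have key := keyPS c
  have htr : (RmatNeg c)ᵀ = !![B1evenC c, B0oddC c; B1oddC c, B0evenC c] := by
    rw [RmatNeg, eta_fin_two ((!![B1evenC c, B1oddC c; B0oddC c, B0evenC c])ᵀ)]
    simp
  rw [etaMat, htr, Rmat, Matrix.mul_fin_two, Matrix.mul_fin_two, Matrix.mul_fin_two,
    one_fin_two]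
  refine Matrix.ext fun i j => ?_
  fin_cases i <;> fin_cases j <;> simp <;>
    first
      | linear_combination key
      | ring
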